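/- For all n ≥ 3 (with initial values D(P1,x)=x, D(P2,x)=x^2+2x, D(P3,x)=x^3+3x^2+x), the domination polynomial of the path satisfies the recurrence D(P_n,x) = x( D(P_{n-1},x) + D(P_{n-2},x) + D(P_{n-3},x) ). -/

import Mathlib

open SimpleGraph Polynomial Finset

open Classical in
/-- The number of dominating sets of `G` of cardinality `i`. -/
noncomputable def domCount {V : Type*} [Fintype V] [DecidableEq V]
    (G : SimpleGraph V) (i : ℕ) : ℕ :=
  (Finset.univ.filter fun S : Finset V =>
    S.card = i ∧ ∀ v : V, v ∈ S ∨ ∃ u ∈ S, G.Adj u v).card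

/-- The domination polynomial of `G`. -/
noncomputable def domPoly {V : Type*} [Fintype V] [DecidableEq V]
    (G : SimpleGraph V) : Polynomial ℤ :=
  ∑ i ∈ Finset.range (Fintype.card V + 1), Polynomial.C (domCount G i : ℤ) * Polynomial.X ^ i

/-- The domination number of `G`. -/
noncomputable def domNum {V : Type*} [Fintype V] [DecidableEq V] (G : SimpleGraph V) : ℕ :=
  sInf {i | ∃ S : Finset V, S.card = i ∧ ∀ v : V, v ∈ S ∨ ∃ u ∈ S, G.Adj u v}

namespace DomPathAux

/-- Domination condition for a path on `n` vertices `0, …, n-1`, expressed for sets of naturals. -/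
def dom (n : ℕ) (T : Finset ℕ) : Prop :=
  ∀ k < n, ∃ t ∈ T, t = k ∨ t + 1 = k ∨ k + 1 = t

instance (n : ℕ) (T : Finset ℕ) : Decidable (dom n T) := by
  unfold dom; infer_instance

/-- The collection of dominating sets of the path `P_n`, of size `i`, as sets of naturals. -/
def A (n i : ℕ) : Finset (Finset ℕ) :=
  (Finset.range n).powerset.filter fun T => T.card = i ∧ dom n T

lemma mem_A {n i : ℕ} {T : Finset ℕ} :
    T ∈ A n i ↔ T ⊆ Finset.range n ∧ T.card = i ∧ dom n T := by
  simp [A, Finset.mem_filter, Finset.mem_powerset, and_assoc]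

lemma sup_mem {T : Finset ℕ} (h : T.Nonempty) : T.sup id ∈ T := by
  obtain ⟨b, hb, he⟩ := Finset.exists_mem_eq_sup T h id
  simpa [he] using hb

lemma le_sup {T : Finset ℕ} {t : ℕ} (ht : t ∈ T) : t ≤ T.sup id :=
  Finset.le_sup (f := id) ht

/-- lower bound on the maximum of a dominating set -/
lemma sup_ge {n : ℕ} {T : Finset ℕ} (hd : dom n T) (hsub : T ⊆ Finset.range n)
    (hn : 1 ≤ n) : n ≤ T.sup id + 2 := by
  obtain ⟨t, ht, hrel⟩ := hd (n - 1) (by omega)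
  have h1 : t < n := Finset.mem_range.mp (hsub ht)
  have h2 : t ≤ T.sup id := le_sup ht
  omega

/-- the "gap" statistic of a dominating set -/
def gap (T : Finset ℕ) : ℕ :=
  if T.card ≤ 1 then 3 else T.sup id - (T.erase (T.sup id)).sup id

lemma singleton_facts {n i : ℕ} {T : Finset ℕ} (hn : 3 ≤ n) (hT : T ∈ A n (i + 1))
    (hc : T.card ≤ 1) : T = {1} ∧ n = 3 ∧ i = 0 := by
  obtain ⟨hsub, hcard, hdom⟩ := mem_A.mp hT
  have hc1 : T.card = 1 := by omega
  obtain ⟨x, rfl⟩ := Finset.card_eq_one.mp hc1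
  have hx : x < n := Finset.mem_range.mp (hsub (Finset.mem_singleton_self x))
  obtain ⟨t, ht, hrel⟩ := hdom 0 (by omega)
  rw [Finset.mem_singleton] at ht
  have hx0 : x ≤ 1 := by omega
  have hs : ({x} : Finset ℕ).sup id = x := by simp
  have := sup_ge hdom hsub (by omega)
  rw [hs] at this
  have hx1 : x = 1 := by omega
  subst hx1
  refine ⟨rfl, by omega, by omega⟩

lemma gap_facts {n i : ℕ} {T : Finset ℕ} (hn : 3 ≤ n) (hT : T ∈ A n (i + 1))
    (hc : 2 ≤ T.card) :
    1 ≤ T.sup id - (T.erase (T.sup id)).sup id ∧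
      T.sup id - (T.erase (T.sup id)).sup id ≤ 3 ∧
      (T.erase (T.sup id)).sup id < T.sup id := by
  obtain ⟨hsub, hcard, hdom⟩ := mem_A.mp hT
  have hne : T.Nonempty := Finset.card_pos.mp (by omega)
  set a := T.sup id with ha
  have haT : a ∈ T := sup_mem hne
  have hane : (T.erase a).Nonempty := by
    rw [← Finset.card_pos, Finset.card_erase_of_mem haT]; omega
  set b := (T.erase a).sup id with hb
  have hbT : b ∈ T.erase a := sup_mem hane
  have hbT' : b ∈ T := Finset.mem_of_mem_erase hbT
  have hba : b ≠ a := Finset.ne_of_mem_erase hbT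
  have hble : b ≤ a := le_sup hbT'
  have hblt : b < a := lt_of_le_of_ne hble hba
  have halt : a < n := Finset.mem_range.mp (hsub haT)
  refine ⟨by omega, ?_, hblt⟩
  by_contra hcon
  push_neg at hcon
  -- a ≥ b + 4; the vertex b + 2 is not dominated
  obtain ⟨t, ht, hrel⟩ := hdom (b + 2) (by omega)
  rcases eq_or_ne t a with rfl | hta
  · omega
  · have : t ≤ b := le_sup (Finset.mem_erase.mpr ⟨hta, ht⟩)
    omega

/-- every dominating set of `P_n` (`n ≥ 3`) has gap 1, 2 or 3 -/
lemma gap_cases {n i : ℕ} {T : Finset ℕ} (hn : 3 ≤ n) (hT : T ∈ A n (i + 1)) :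
    gap T = 1 ∨ gap T = 2 ∨ gap T = 3 := by
  unfold gap
  by_cases hc : T.card ≤ 1
  · simp [hc]
  · push_neg at hc
    have := gap_facts hn hT (by omega)
    simp only [if_neg (by omega : ¬ T.card ≤ 1)]
    omega

/-- The key bijection: dominating sets of `P_{m+3}` of size `i+1` and gap `g`
    correspond to dominating sets of `P_{m+3-g}` of size `i`. -/
lemma card_filter_gap (m i g : ℕ) (hg1 : 1 ≤ g) (hg3 : g ≤ 3) :
    ((A (m + 3) (i + 1)).filter (fun T => gap T = g)).card = (A (m + 3 - g) i).card := by
  refine Finset.card_bij' (fun T _ => T.erase (T.sup id))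
    (fun T' _ => if T' = ∅ then {1} else insert (T'.sup id + g) T') ?hi ?hj ?left ?right
  case hi =>
    -- forward map lands in target
    intro T hT
    rw [Finset.mem_filter] at hT
    obtain ⟨hTA, hgap⟩ := hT
    obtain ⟨hsub, hcard, hdom⟩ := mem_A.mp hTA
    by_cases hc : T.card ≤ 1
    · obtain ⟨rfl, hn3, hi0⟩ := singleton_facts (by omega) hTA hc
      have hg : g = 3 := by
        unfold gap at hgap; rw [if_pos hc] at hgap; omega
      have : ({1} : Finset ℕ).sup id = 1 := by simp
      rw [this]
      have he : ({1} : Finset ℕ).erase 1 = ∅ := by simp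
      rw [he]
      subst hi0
      rw [mem_A]
      refine ⟨by simp, by simp, ?_⟩
      intro k hk
      omega
    · push_neg at hc
      have hne : T.Nonempty := Finset.card_pos.mp (by omega)
      obtain ⟨hge1, hle3, hblt⟩ := gap_facts (by omega) hTA (by omega)
      set a := T.sup id with ha
      have haT : a ∈ T := sup_mem hne
      set b := (T.erase a).sup id with hb
      have hgap' : a - b = g := by
        unfold gap at hgap; rw [if_neg (by omega)] at hgap; exact hgap
      have halt : a < m + 3 := Finset.mem_range.mp (hsub haT)
      have han : m + 3 ≤ a + 2 := sup_ge hdom hsub (by omega)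
      rw [mem_A]
      refine ⟨?_, ?_, ?_⟩
      · intro t ht
        have h1 : t ≤ b := le_sup ht
        rw [Finset.mem_range]
        omega
      · rw [Finset.card_erase_of_mem haT]; omega
      · intro k hk
        obtain ⟨t, ht, hrel⟩ := hdom k (by omega)
        by_cases hta : t = a
        · have hane : (T.erase a).Nonempty := by
            rw [← Finset.card_pos, Finset.card_erase_of_mem haT]; omega
          refine ⟨b, sup_mem hane, ?_⟩
          omega
        · exact ⟨t, Finset.mem_erase.mpr ⟨hta, ht⟩, hrel⟩
  case hj =>
    -- backward map lands in source
    intro T' hT'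
    obtain ⟨hsub, hcard, hdom⟩ := mem_A.mp hT'
    by_cases hE : T' = ∅
    · subst hE
      rw [if_pos rfl]
      have hi0 : i = 0 := by simpa using hcard.symm
      have hng : m + 3 - g = 0 := by
        by_contra hcon
        obtain ⟨t, ht, -⟩ := hdom 0 (by omega)
        simp at ht
      have hg : g = 3 ∧ m = 0 := by omega
      obtain ⟨rfl, rfl⟩ := hg
      rw [Finset.mem_filter]
      subst hi0
      constructor
      · rw [mem_A]
        refine ⟨by simp, by simp, by decide⟩
      · rfl
    · rw [if_neg hE]
      have hne : T'.Nonempty := Finset.nonempty_iff_ne_empty.mpr hE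
      set b := T'.sup id with hb
      have hbT : b ∈ T' := sup_mem hne
      have hblt : b < m + 3 - g := Finset.mem_range.mp (hsub hbT)
      have hn'1 : 1 ≤ m + 3 - g := by omega
      have hbn : m + 3 - g ≤ b + 2 := sup_ge hdom hsub hn'1
      have hbnotin : b + g ∉ T' := fun h => by have := le_sup h; omega
      rw [Finset.mem_filter]
      constructor
      · rw [mem_A]
        refine ⟨?_, ?_, ?_⟩
        · intro t ht
          rw [Finset.mem_insert] at ht
          rw [Finset.mem_range]
          rcases ht with rfl | ht
          · omega
          · have := Finset.mem_range.mp (hsub ht); omega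
        · rw [Finset.card_insert_of_notMem hbnotin, hcard]
        · intro k hk
          by_cases hks : k < m + 3 - g
          · obtain ⟨t, ht, hrel⟩ := hdom k hks
            exact ⟨t, Finset.mem_insert_of_mem ht, hrel⟩
          · have key : (b + g = k ∨ b + g + 1 = k ∨ k + 1 = b + g) ∨
                (b = k ∨ b + 1 = k ∨ k + 1 = b) := by omega
            rcases key with h | h
            · exact ⟨b + g, Finset.mem_insert_self _ _, h⟩
            · exact ⟨b, Finset.mem_insert_of_mem hbT, h⟩
      · -- gap = g
        have hsupins : (insert (b + g) T').sup id = b + g := by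
          rw [Finset.sup_insert]
          simp only [id]
          exact sup_eq_left.mpr (by omega)
        have hcardins : (insert (b + g) T').card = T'.card + 1 :=
          Finset.card_insert_of_notMem hbnotin
        have hc2 : ¬ (insert (b + g) T').card ≤ 1 := by
          rw [hcardins]
          have : 1 ≤ T'.card := Finset.card_pos.mpr hne
          omega
        unfold gap
        rw [if_neg hc2, hsupins, Finset.erase_insert hbnotin]
        omega
  case left =>
    -- left inverse
    intro T hT
    rw [Finset.mem_filter] at hT
    obtain ⟨hTA, hgap⟩ := hT
    by_cases hc : T.card ≤ 1
    · obtain ⟨rfl, hn3, hi0⟩ := singleton_facts (by omega) hTA hc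
      have : ({1} : Finset ℕ).sup id = 1 := by simp
      rw [this]
      have he : ({1} : Finset ℕ).erase 1 = ∅ := by simp
      rw [he, if_pos rfl]
    · push_neg at hc
      obtain ⟨hge1, hle3, hblt⟩ := gap_facts (by omega) hTA (by omega)
      obtain ⟨hsub, hcard, hdom⟩ := mem_A.mp hTA
      have hne : T.Nonempty := Finset.card_pos.mp (by omega)
      set a := T.sup id with ha
      have haT : a ∈ T := sup_mem hne
      have hane : (T.erase a).Nonempty := by
        rw [← Finset.card_pos, Finset.card_erase_of_mem haT]; omega
      rw [if_neg (Finset.nonempty_iff_ne_empty.mp hane)]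
      have hgap' : a - (T.erase a).sup id = g := by
        unfold gap at hgap; rw [if_neg (by omega)] at hgap; exact hgap
      have : (T.erase a).sup id + g = a := by omega
      rw [this, Finset.insert_erase haT]
  case right =>
    -- right inverse
    intro T' hT'
    obtain ⟨hsub, hcard, hdom⟩ := mem_A.mp hT'
    by_cases hE : T' = ∅
    · subst hE
      rw [if_pos rfl]
      have : ({1} : Finset ℕ).sup id = 1 := by simp
      rw [this]
      simp
    · rw [if_neg hE]
      have hne : T'.Nonempty := Finset.nonempty_iff_ne_empty.mpr hE
      set b := T'.sup id with hb
      have hbnotin : b + g ∉ T' := fun h => by have := le_sup h; omega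
      have hsupins : (insert (b + g) T').sup id = b + g := by
        rw [Finset.sup_insert]
        simp only [id]
        exact sup_eq_left.mpr (by omega)
      rw [hsupins, Finset.erase_insert hbnotin]

/-- the recurrence on counts -/
lemma recB (m i : ℕ) :
    (A (m + 3) (i + 1)).card =
      (A (m + 2) i).card + (A (m + 1) i).card + (A m i).card := by
  classical
  have h1 := card_filter_gap m i 1 (by omega) (by omega)
  have h2 := card_filter_gap m i 2 (by omega) (by omega)
  have h3 := card_filter_gap m i 3 (by omega) (by omega)
  have e1 : m + 3 - 1 = m + 2 := by omega
  have e2 : m + 3 - 2 = m + 1 := by omega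
  have e3 : m + 3 - 3 = m := by omega
  rw [e1] at h1; rw [e2] at h2; rw [e3] at h3
  rw [← h1, ← h2, ← h3]
  set s := A (m + 3) (i + 1) with hs
  have split1 : (s.filter (fun T => gap T = 1)).card
      + (s.filter (fun T => ¬ gap T = 1)).card = s.card :=
    Finset.card_filter_add_card_filter_not _
  have split2 : ((s.filter (fun T => ¬ gap T = 1)).filter (fun T => gap T = 2)).card
      + ((s.filter (fun T => ¬ gap T = 1)).filter (fun T => ¬ gap T = 2)).card
      = (s.filter (fun T => ¬ gap T = 1)).card :=
    Finset.card_filter_add_card_filter_not _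
  have eq2 : (s.filter (fun T => ¬ gap T = 1)).filter (fun T => gap T = 2)
      = s.filter (fun T => gap T = 2) := by
    rw [Finset.filter_filter]
    apply Finset.filter_congr
    intro T hT
    constructor
    · tauto
    · intro h; exact ⟨by omega, h⟩
  have eq3 : (s.filter (fun T => ¬ gap T = 1)).filter (fun T => ¬ gap T = 2)
      = s.filter (fun T => gap T = 3) := by
    rw [Finset.filter_filter]
    apply Finset.filter_congr
    intro T hT
    have := gap_cases (n := m + 3) (by omega) hT
    constructor
    · intro ⟨ha, hb⟩; omega
    · intro h; omega
  rw [eq2, eq3] at split2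
  omega

lemma A_card_zero {n : ℕ} (hn : 1 ≤ n) : (A n 0).card = 0 := by
  rw [Finset.card_eq_zero]
  ext T
  simp only [mem_A, Finset.notMem_empty, iff_false, not_and]
  intro hsub hcard
  rw [Finset.card_eq_zero] at hcard
  subst hcard
  intro hdom
  obtain ⟨t, ht, -⟩ := hdom 0 (by omega)
  simp at ht

lemma A_card_big {n i : ℕ} (h : n < i) : (A n i).card = 0 := by
  rw [Finset.card_eq_zero]
  ext T
  simp only [mem_A, Finset.notMem_empty, iff_false, not_and]
  intro hsub hcard
  have := Finset.card_le_card hsub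
  rw [Finset.card_range] at this
  omega

/-- transfer: `domCount` of a path equals the count of good subsets of `ℕ` -/
lemma domCount_eq (n i : ℕ) : domCount (SimpleGraph.pathGraph n) i = (A n i).card := by
  classical
  unfold domCount
  apply Finset.card_bij (fun S _ => S.image Fin.val)
  · intro S hS
    simp only [Finset.mem_filter, Finset.mem_univ, true_and] at hS
    obtain ⟨hcard, hdomS⟩ := hS
    rw [mem_A]
    refine ⟨?_, ?_, ?_⟩
    · intro t ht
      rw [Finset.mem_image] at ht
      obtain ⟨v, -, rfl⟩ := ht
      exact Finset.mem_range.mpr v.isLt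
    · rw [Finset.card_image_of_injective _ Fin.val_injective, hcard]
    · intro k hk
      rcases hdomS ⟨k, hk⟩ with hv | ⟨u, hu, hadj⟩
      · exact ⟨k, Finset.mem_image.mpr ⟨⟨k, hk⟩, hv, rfl⟩, Or.inl rfl⟩
      · refine ⟨u.val, Finset.mem_image.mpr ⟨u, hu, rfl⟩, ?_⟩
        rcases SimpleGraph.pathGraph_adj.mp hadj with h | h
        · exact Or.inr (Or.inl h)
        · exact Or.inr (Or.inr h)
  · intro S₁ h₁ S₂ h₂ heq
    ext v
    constructor
    · intro hv
      have : (v : ℕ) ∈ S₂.image Fin.val := by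
        rw [← heq]; exact Finset.mem_image.mpr ⟨v, hv, rfl⟩
      obtain ⟨u, hu, huv⟩ := Finset.mem_image.mp this
      rwa [Fin.val_injective huv] at hu
    · intro hv
      have : (v : ℕ) ∈ S₁.image Fin.val := by
        rw [heq]; exact Finset.mem_image.mpr ⟨v, hv, rfl⟩
      obtain ⟨u, hu, huv⟩ := Finset.mem_image.mp this
      rwa [Fin.val_injective huv] at hu
  · intro T hT
    rw [mem_A] at hT
    obtain ⟨hsub, hcard, hdom⟩ := hT
    have hlt : ∀ t ∈ T, t < n := fun t ht => Finset.mem_range.mp (hsub ht)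
    refine ⟨T.attachFin hlt, ?_, ?_⟩
    · simp only [Finset.mem_filter, Finset.mem_univ, true_and]
      constructor
      · rw [Finset.card_attachFin, hcard]
      · intro v
        obtain ⟨t, ht, hrel⟩ := hdom v.val v.isLt
        rcases hrel with rfl | h | h
        · exact Or.inl ((Finset.mem_attachFin hlt).mpr ht)
        · refine Or.inr ⟨⟨t, hlt t ht⟩, (Finset.mem_attachFin hlt).mpr ht, ?_⟩
          exact SimpleGraph.pathGraph_adj.mpr (Or.inl h)
        · refine Or.inr ⟨⟨t, hlt t ht⟩, (Finset.mem_attachFin hlt).mpr ht, ?_⟩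
          exact SimpleGraph.pathGraph_adj.mpr (Or.inr h)
    · ext k
      simp only [Finset.mem_image, Finset.mem_attachFin]
      constructor
      · rintro ⟨a, ha, rfl⟩; exact ha
      · intro hk; exact ⟨⟨k, hlt k hk⟩, hk, rfl⟩

lemma domPoly_eq (n : ℕ) :
    domPoly (SimpleGraph.pathGraph n) =
      ∑ i ∈ Finset.range (n + 1), Polynomial.C (((A n i).card : ℤ)) * Polynomial.X ^ i := by
  unfold domPoly
  simp [Fintype.card_fin, domCount_eq]

lemma rec_poly (m : ℕ) :
    (∑ i ∈ Finset.range (m + 4), Polynomial.C (((A (m + 3) i).card : ℤ)) * Polynomial.X ^ i)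
      = Polynomial.X *
        ((∑ i ∈ Finset.range (m + 3), Polynomial.C (((A (m + 2) i).card : ℤ)) * Polynomial.X ^ i)
        + (∑ i ∈ Finset.range (m + 2), Polynomial.C (((A (m + 1) i).card : ℤ)) * Polynomial.X ^ i)
        + (∑ i ∈ Finset.range (m + 1), Polynomial.C (((A m i).card : ℤ)) * Polynomial.X ^ i)) := by
  have e2 : (∑ i ∈ Finset.range (m + 2), Polynomial.C (((A (m + 1) i).card : ℤ)) * Polynomial.X ^ i)
      = ∑ i ∈ Finset.range (m + 3), Polynomial.C (((A (m + 1) i).card : ℤ)) * Polynomial.X ^ i := by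
    rw [Finset.sum_range_succ (n := m + 2)]
    rw [A_card_big (by omega : m + 1 < m + 2)]
    simp
  have e3 : (∑ i ∈ Finset.range (m + 1), Polynomial.C (((A m i).card : ℤ)) * Polynomial.X ^ i)
      = ∑ i ∈ Finset.range (m + 3), Polynomial.C (((A m i).card : ℤ)) * Polynomial.X ^ i := by
    rw [Finset.sum_range_succ (n := m + 2), Finset.sum_range_succ (n := m + 1)]
    rw [A_card_big (by omega : m < m + 2), A_card_big (by omega : m < m + 1)]
    simp
  rw [e2, e3]
  have lhs : (∑ i ∈ Finset.range (m + 4), Polynomial.C (((A (m + 3) i).card : ℤ)) * Polynomial.X ^ i)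
      = ∑ i ∈ Finset.range (m + 3), Polynomial.C (((A (m + 3) (i + 1)).card : ℤ)) * Polynomial.X ^ (i + 1) := by
    rw [Finset.sum_range_succ' _ (m + 3)]
    rw [A_card_zero (by omega : 1 ≤ m + 3)]
    simp
  rw [lhs]
  rw [mul_add, mul_add]
  rw [Finset.mul_sum, Finset.mul_sum, Finset.mul_sum]
  rw [← Finset.sum_add_distrib, ← Finset.sum_add_distrib]
  apply Finset.sum_congr rfl
  intro i hi
  have key : ((A (m + 3) (i + 1)).card : ℤ)
      = ((A (m + 2) i).card : ℤ) + ((A (m + 1) i).card : ℤ) + ((A m i).card : ℤ) := by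
    exact_mod_cast recB m i
  rw [key]
  rw [map_add, map_add]
  ring

end DomPathAux

open DomPathAux in
theorem domPoly_path_recurrence :
    domPoly (pathGraph 1) = X ∧
    domPoly (pathGraph 2) = X ^ 2 + 2 * X ∧
    domPoly (pathGraph 3) = X ^ 3 + 3 * X ^ 2 + X ∧
    ∀ n : ℕ, 3 ≤ n →
      domPoly (pathGraph n) =
        X * (domPoly (pathGraph (n - 1)) + domPoly (pathGraph (n - 2))
          + domPoly (pathGraph (n - 3))) := by
  refine ⟨?_, ?_, ?_, ?_⟩
  · rw [domPoly_eq]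
    have h0 : (A 1 0).card = 0 := by decide
    have h1 : (A 1 1).card = 1 := by decide
    rw [Finset.sum_range_succ, Finset.sum_range_succ, Finset.sum_range_zero, h0, h1]
    simp
  · rw [domPoly_eq]
    have h0 : (A 2 0).card = 0 := by decide
    have h1 : (A 2 1).card = 2 := by decide
    have h2 : (A 2 2).card = 1 := by decide
    rw [Finset.sum_range_succ, Finset.sum_range_succ, Finset.sum_range_succ,
      Finset.sum_range_zero, h0, h1, h2]
    push_cast
    simp only [map_ofNat, Polynomial.C_0, Polynomial.C_1]
    ring
  · rw [domPoly_eq]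
    have h0 : (A 3 0).card = 0 := by decide
    have h1 : (A 3 1).card = 1 := by decide
    have h2 : (A 3 2).card = 3 := by decide
    have h3 : (A 3 3).card = 1 := by decide
    rw [Finset.sum_range_succ, Finset.sum_range_succ, Finset.sum_range_succ,
      Finset.sum_range_succ, Finset.sum_range_zero, h0, h1, h2, h3]
    push_cast
    simp only [map_ofNat, Polynomial.C_0, Polynomial.C_1]
    ring
  · intro n hn
    obtain ⟨m, rfl⟩ : ∃ m, n = m + 3 := ⟨n - 3, by omega⟩
    rw [(by omega : m + 3 - 1 = m + 2), (by omega : m + 3 - 2 = m + 1),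
      (by omega : m + 3 - 3 = m)]
    rw [domPoly_eq, domPoly_eq, domPoly_eq, domPoly_eq]
    exact rec_poly m
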